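/- Let p be an odd prime, m ≥ 1, q = p^m, d ≥ 2, and let j be a unit of ℤ/qℤ. For s ∈ ℤ/qℤ let G(s,q) = Σ_{x ∈ ℤ/qℤ} exp(2πi s x²/q) be the quadratic Gauss sum. Then | Σ_{s ∈ (ℤ/qℤ)^×} G(s,q)^d · exp(−2πi s j/q) | ≤ p^{md/2} · ( p^{m/2} + p^{m−1} ). -/

import Mathlib

/-- The canonical additive character of `ℤ/qℤ`: `c ↦ exp(2πi·c̃/q)` where `c̃` is the
canonical integer representative of `c`. -/
noncomputable def eZMod (q : ℕ) (c : ZMod q) : ℂ :=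
  Complex.exp (2 * Real.pi * Complex.I * c.val / q)

open Complex Finset

section aux

variable {q : ℕ} [NeZero q]

lemma eZMod_eq_stdAddChar (c : ZMod q) : eZMod q c = ZMod.stdAddChar c := by
  rw [ZMod.stdAddChar_apply, ZMod.toCircle_apply, eZMod]

lemma sum_stdAddChar_mul' (b : ZMod q) (hb : b ≠ 0) :
    ∑ x : ZMod q, ZMod.stdAddChar (x * b) = 0 := by
  rw [AddChar.sum_mulShift b (ZMod.isPrimitive_stdAddChar q)]
  simp [hb]

lemma ringChar_pos' : 0 < ringChar (ZMod q) := by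
  rw [ZMod.ringChar_zmod_n]; exact Nat.pos_of_ne_zero (NeZero.ne q)

lemma conj_stdAddChar (a : ZMod q) :
    (starRingEnd ℂ) (ZMod.stdAddChar a) = ZMod.stdAddChar (-a) := by
  rw [AddChar.starComp_apply ringChar_pos', AddChar.inv_apply]

lemma mul_conj_G {s : ZMod q} (hs : IsUnit s) (h2 : IsUnit (2 : ZMod q)) :
    (∑ x : ZMod q, ZMod.stdAddChar (s * x^2)) *
      (starRingEnd ℂ) (∑ x : ZMod q, ZMod.stdAddChar (s * x^2)) = (q : ℂ) := by
  classical
  have hconj : (starRingEnd ℂ) (∑ x : ZMod q, ZMod.stdAddChar (s * x^2))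
      = ∑ y : ZMod q, ZMod.stdAddChar (-(s * y^2)) := by
    rw [map_sum]
    exact Finset.sum_congr rfl fun y _ => conj_stdAddChar _
  rw [hconj, Finset.sum_mul_sum]
  have step1 : ∀ y : ZMod q, ∑ x : ZMod q,
      ZMod.stdAddChar (s * x^2) * ZMod.stdAddChar (-(s * y^2))
      = ∑ h : ZMod q, ZMod.stdAddChar (s * h^2) * ZMod.stdAddChar (y * (2*s*h)) := by
    intro y
    refine (Fintype.sum_equiv (Equiv.addLeft y)
      (fun h => ZMod.stdAddChar (s * h^2) * ZMod.stdAddChar (y * (2*s*h)))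
      (fun x => ZMod.stdAddChar (s * x^2) * ZMod.stdAddChar (-(s * y^2)))
      fun h => ?_).symm
    show ZMod.stdAddChar (s * h^2) * ZMod.stdAddChar (y * (2*s*h))
        = ZMod.stdAddChar (s * (y + h)^2) * ZMod.stdAddChar (-(s * y^2))
    rw [← AddChar.map_add_eq_mul, ← AddChar.map_add_eq_mul]
    congr 1
    ring
  calc ∑ x : ZMod q, ∑ y : ZMod q,
        ZMod.stdAddChar (s * x^2) * ZMod.stdAddChar (-(s * y^2))
      = ∑ y : ZMod q, ∑ x : ZMod q,
        ZMod.stdAddChar (s * x^2) * ZMod.stdAddChar (-(s * y^2)) := Finset.sum_comm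
    _ = ∑ y : ZMod q, ∑ h : ZMod q,
        ZMod.stdAddChar (s * h^2) * ZMod.stdAddChar (y * (2*s*h)) :=
        Finset.sum_congr rfl fun y _ => step1 y
    _ = ∑ h : ZMod q, ZMod.stdAddChar (s * h^2) * ∑ y : ZMod q,
        ZMod.stdAddChar (y * (2*s*h)) := by
        rw [Finset.sum_comm]
        exact Finset.sum_congr rfl fun h _ => by rw [Finset.mul_sum]
    _ = (q : ℂ) := by
        rw [Finset.sum_eq_single 0]
        · rw [show (s*(0:ZMod q)^2) = 0 by ring, AddChar.map_zero_eq_one, one_mul,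
            show (2*s*(0:ZMod q)) = 0 by ring]
          simp [AddChar.map_zero_eq_one, ZMod.card q]
        · intro h _ hh
          rw [sum_stdAddChar_mul' _ ?_, mul_zero]
          exact fun h0 => hh ((h2.mul hs).mul_right_eq_zero.mp h0)
        · intro h; exact absurd (Finset.mem_univ 0) h

lemma G_mul_sq (s : ZMod q) (t : (ZMod q)ˣ) :
    ∑ x : ZMod q, ZMod.stdAddChar (s * (t : ZMod q)^2 * x^2)
      = ∑ x : ZMod q, ZMod.stdAddChar (s * x^2) := by
  refine Fintype.sum_equiv (Units.mulLeft t)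
    (fun x => ZMod.stdAddChar (s * (t:ZMod q)^2 * x^2))
    (fun x => ZMod.stdAddChar (s * x^2)) fun x => ?_
  simp only [Units.mulLeft_apply]
  congr 1
  ring

lemma sum_eq_zero_of_two_le (p m d : ℕ) [Fact p.Prime] (hodd : Odd p)
    (hm : 2 ≤ m) (j : ZMod (p ^ m)) (hj : IsUnit j) :
    (∑ s : (ZMod (p ^ m))ˣ,
        (∑ x : ZMod (p ^ m), ZMod.stdAddChar ((s : ZMod (p ^ m)) * x ^ 2)) ^ d *
          ZMod.stdAddChar (-((s : ZMod (p ^ m)) * j))) = 0 := by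
  classical
  have hp : p.Prime := Fact.out
  haveI : NeZero (p ^ m) := ⟨pow_ne_zero _ hp.ne_zero⟩
  set P : ZMod (p ^ m) := (p : ZMod (p ^ m)) ^ (m - 1) with hPdef
  have hP0 : P ≠ 0 := by
    intro h0
    rw [hPdef, show ((p : ZMod (p^m)))^(m-1) = ((p^(m-1) : ℕ) : ZMod (p^m)) by push_cast; rfl,
      ZMod.natCast_eq_zero_iff] at h0
    rw [Nat.pow_dvd_pow_iff_le_right hp.one_lt] at h0
    omega
  have hPP : P * P = 0 := by
    have hpm : (p : ZMod (p^m))^m = 0 := by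
      rw [← Nat.cast_pow, ZMod.natCast_self]
    have : P * P = (p : ZMod (p^m))^m * (p : ZMod (p^m))^(m-2) := by
      rw [hPdef, ← pow_add, ← pow_add]; congr 1; omega
    rw [this, hpm, zero_mul]
  set F : (ZMod (p ^ m))ˣ → ℂ := fun s =>
    (∑ x : ZMod (p ^ m), ZMod.stdAddChar ((s : ZMod (p ^ m)) * x ^ 2)) ^ d *
      ZMod.stdAddChar (-((s : ZMod (p ^ m)) * j)) with hFdef
  have key : ∀ a : ZMod (p ^ m), (∑ s, F s)
      = ∑ s : (ZMod (p ^ m))ˣ, F s * ZMod.stdAddChar (-(2 * (s : ZMod (p^m)) * j * P) * a) := by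
    intro a
    have hnil : IsNilpotent (P * a) := ⟨2, by rw [sq, show P*a*(P*a) = (P*P)*(a*a) by ring, hPP, zero_mul]⟩
    have hu : IsUnit (1 + P * a) := hnil.isUnit_one_add
    have hre : ∑ s : (ZMod (p^m))ˣ, F (s * hu.unit ^ 2) = ∑ s, F s :=
      Fintype.sum_equiv (Equiv.mulRight (hu.unit ^ 2)) _ _ (fun s => rfl)
    rw [← hre]
    refine Finset.sum_congr rfl fun s _ => ?_
    have hval : ((s * hu.unit ^ 2 : (ZMod (p^m))ˣ) : ZMod (p^m))
        = (s : ZMod (p^m)) * (1 + P * a)^2 := by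
      rw [Units.val_mul, Units.val_pow_eq_pow_val, hu.unit_spec]
    rw [hFdef]
    simp only [hval]
    have hG : ∑ x : ZMod (p^m), ZMod.stdAddChar ((s : ZMod (p^m)) * (1 + P * a)^2 * x ^ 2)
        = ∑ x : ZMod (p^m), ZMod.stdAddChar ((s : ZMod (p^m)) * x ^ 2) := by
      have := G_mul_sq (s : ZMod (p^m)) hu.unit
      rwa [hu.unit_spec] at this
    rw [hG]
    have harg : -((s : ZMod (p^m)) * (1 + P * a)^2 * j)
        = -((s : ZMod (p^m)) * j) + -(2 * (s : ZMod (p^m)) * j * P) * a := by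
      linear_combination (-((s : ZMod (p^m)) * j * a * a)) * hPP
    rw [harg, AddChar.map_add_eq_mul]
    ring
  have hq : ((p ^ m : ℕ) : ℂ) * (∑ s, F s) = 0 := by
    calc ((p ^ m : ℕ) : ℂ) * (∑ s, F s) = ∑ _a : ZMod (p^m), (∑ s, F s) := by
          rw [Finset.sum_const, Finset.card_univ, ZMod.card, nsmul_eq_mul]
      _ = ∑ a : ZMod (p^m), ∑ s : (ZMod (p^m))ˣ,
            F s * ZMod.stdAddChar (-(2 * (s : ZMod (p^m)) * j * P) * a) :=
          Finset.sum_congr rfl fun a _ => key a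
      _ = ∑ s : (ZMod (p^m))ˣ, ∑ a : ZMod (p^m),
            F s * ZMod.stdAddChar (-(2 * (s : ZMod (p^m)) * j * P) * a) := Finset.sum_comm
      _ = 0 := by
          refine Finset.sum_eq_zero fun s _ => ?_
          rw [← Finset.mul_sum]
          have h2 : IsUnit (2 : ZMod (p^m)) := by
            rw [show (2 : ZMod (p^m)) = ((2:ℕ) : ZMod (p^m)) by push_cast; rfl,
              ZMod.isUnit_iff_coprime]
            exact Nat.Coprime.pow_right _ (Nat.coprime_two_left.mpr hodd)
          have hcs : -(2 * (s : ZMod (p^m)) * j * P) ≠ 0 := by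
            rw [neg_ne_zero]
            intro h0
            exact hP0 (((h2.mul s.isUnit).mul hj).mul_right_eq_zero.mp h0)
          have : ∑ a : ZMod (p^m), ZMod.stdAddChar (-(2 * (s : ZMod (p^m)) * j * P) * a) = 0 := by
            rw [show ∀ c : ZMod (p^m), (∑ a : ZMod (p^m), ZMod.stdAddChar (c * a))
              = ∑ a : ZMod (p^m), ZMod.stdAddChar (a * c) from fun c => by
                simp_rw [mul_comm]] 
            exact sum_stdAddChar_mul' _ hcs
          rw [this, mul_zero]
  have hne : ((p ^ m : ℕ) : ℂ) ≠ 0 := by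
    exact_mod_cast (pow_ne_zero m hp.ne_zero)
  exact (mul_eq_zero.mp hq).resolve_left hne

lemma m_one_bound (p d : ℕ) [NeZero p] (hpp : p.Prime) (hodd : Odd p) (hd : 2 ≤ d)
    (j : ZMod p) (hj : IsUnit j) :
    ‖(∑ s : (ZMod p)ˣ,
        (∑ x : ZMod p, ZMod.stdAddChar ((s : ZMod p) * x ^ 2)) ^ d *
          ZMod.stdAddChar (-((s : ZMod p) * j)))‖ ≤
      Real.sqrt p ^ d * (Real.sqrt p + 1) := by
  classical
  have hp : p.Prime := hpp
  haveI : Fact p.Prime := ⟨hpp⟩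
  have hp2 : p ≠ 2 := by
    rintro rfl
    rw [Nat.odd_iff] at hodd
    omega
  have hchar2 : ringChar (ZMod p) ≠ 2 := by rw [ZMod.ringChar_zmod_n]; exact hp2
  have hj0 : j ≠ 0 := hj.ne_zero
  -- summing a function over units versus over all of `ZMod p`
  have unit_sum : ∀ f : ZMod p → ℂ, ∑ s : (ZMod p)ˣ, f (s : ZMod p)
      = (∑ x : ZMod p, f x) - f 0 := by
    intro f
    have h1 : ∑ s : (ZMod p)ˣ, f (s : ZMod p) = ∑ x : {x : ZMod p // x ≠ 0}, f ↑x :=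
      Fintype.sum_equiv unitsEquivNeZero _ _ (fun s => by simp)
    have h2 : ∑ x : {x : ZMod p // x ≠ 0}, f ↑x
        = ∑ x ∈ Finset.univ.erase (0 : ZMod p), f x :=
      (Finset.sum_subtype _ (fun x => by simp) f).symm
    rw [h1, h2, Finset.sum_erase_eq_sub (Finset.mem_univ _)]
  have unit_char_sum : ∀ c : ZMod p, (∑ s : (ZMod p)ˣ, ZMod.stdAddChar ((s : ZMod p) * c))
      = if c = 0 then (p : ℂ) - 1 else -1 := by
    intro c
    rw [unit_sum (fun x => ZMod.stdAddChar (x * c))]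
    by_cases hc : c = 0
    · simp only [hc, if_pos, mul_zero, AddChar.map_zero_eq_one]
      rw [Finset.sum_const, Finset.card_univ, ZMod.card, nsmul_eq_mul, mul_one]
    · rw [sum_stdAddChar_mul' c hc, if_neg hc]
      simp
  -- the Ramanujan-type sum
  set C : ℂ := ∑ s : (ZMod p)ˣ, ZMod.stdAddChar (-((s : ZMod p) * j)) with hCdef
  have hCval : C = -1 := by
    rw [hCdef]
    have : ∀ s : (ZMod p)ˣ, ZMod.stdAddChar (-((s : ZMod p) * j))
        = ZMod.stdAddChar ((s : ZMod p) * (-j)) := fun s => by congr 1; ring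
    rw [Finset.sum_congr rfl fun s _ => this s, unit_char_sum (-j),
      if_neg (by simpa using hj0)]
  -- the quadratic character sum over units
  have hχunits : ∑ s : (ZMod p)ˣ, ((quadraticChar (ZMod p) (s : ZMod p) : ℤ) : ℂ) = 0 := by
    rw [unit_sum (fun x => ((quadraticChar (ZMod p) x : ℤ) : ℂ))]
    have h0 : ∑ x : ZMod p, ((quadraticChar (ZMod p) x : ℤ) : ℂ) = 0 := by
      have := quadraticChar_sum_zero hchar2
      have h1 : ((∑ x : ZMod p, (quadraticChar (ZMod p) x : ℤ) : ℤ) : ℂ)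
          = ∑ x : ZMod p, ((quadraticChar (ZMod p) x : ℤ) : ℂ) := by push_cast; rfl
      rw [← h1]
      rw [show (∑ x : ZMod p, (quadraticChar (ZMod p) x : ℤ)) = 0 from mod_cast this]
      simp
    rw [h0, quadraticChar_zero]
    simp
  -- the twisted character sum `T`
  set T : ℂ := ∑ s : (ZMod p)ˣ,
      ((quadraticChar (ZMod p) (s : ZMod p) : ℤ) : ℂ) * ZMod.stdAddChar (-((s : ZMod p) * j))
      with hTdef
  have hconjT : (starRingEnd ℂ) T = ∑ t : (ZMod p)ˣ,
      ((quadraticChar (ZMod p) (t : ZMod p) : ℤ) : ℂ) * ZMod.stdAddChar ((t : ZMod p) * j) := by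
    rw [hTdef, map_sum]
    refine Finset.sum_congr rfl fun t _ => ?_
    rw [map_mul, conj_stdAddChar, neg_neg, map_intCast]
  have hTT : T * (starRingEnd ℂ) T = (p : ℂ) := by
    rw [hconjT, hTdef, Finset.sum_mul_sum]
    calc (∑ s : (ZMod p)ˣ, ∑ t : (ZMod p)ˣ,
          (((quadraticChar (ZMod p) (s : ZMod p) : ℤ) : ℂ) * ZMod.stdAddChar (-((s : ZMod p) * j))) *
          (((quadraticChar (ZMod p) (t : ZMod p) : ℤ) : ℂ) * ZMod.stdAddChar ((t : ZMod p) * j)))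
        = ∑ t : (ZMod p)ˣ, ∑ s : (ZMod p)ˣ,
          (((quadraticChar (ZMod p) (s : ZMod p) : ℤ) : ℂ) * ZMod.stdAddChar (-((s : ZMod p) * j))) *
          (((quadraticChar (ZMod p) (t : ZMod p) : ℤ) : ℂ) * ZMod.stdAddChar ((t : ZMod p) * j)) :=
          Finset.sum_comm
      _ = ∑ t : (ZMod p)ˣ, ∑ u : (ZMod p)ˣ,
          ((quadraticChar (ZMod p) (u : ZMod p) : ℤ) : ℂ) *
            ZMod.stdAddChar ((t : ZMod p) * ((1 - (u : ZMod p)) * j)) := by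
          refine Finset.sum_congr rfl fun t _ => ?_
          refine (Fintype.sum_equiv (Equiv.mulLeft t)
            (fun u => ((quadraticChar (ZMod p) (u : ZMod p) : ℤ) : ℂ) *
              ZMod.stdAddChar ((t : ZMod p) * ((1 - (u : ZMod p)) * j)))
            (fun s => (((quadraticChar (ZMod p) (s : ZMod p) : ℤ) : ℂ) *
              ZMod.stdAddChar (-((s : ZMod p) * j))) *
              (((quadraticChar (ZMod p) (t : ZMod p) : ℤ) : ℂ) *
                ZMod.stdAddChar ((t : ZMod p) * j))) fun u => ?_).symm
          show ((quadraticChar (ZMod p) (u : ZMod p) : ℤ) : ℂ) *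
              ZMod.stdAddChar ((t : ZMod p) * ((1 - (u : ZMod p)) * j))
            = (((quadraticChar (ZMod p) ((t * u : (ZMod p)ˣ) : ZMod p) : ℤ) : ℂ) *
              ZMod.stdAddChar (-(((t * u : (ZMod p)ˣ) : ZMod p) * j))) *
              (((quadraticChar (ZMod p) (t : ZMod p) : ℤ) : ℂ) *
                ZMod.stdAddChar ((t : ZMod p) * j))
          have hsq : (((quadraticChar (ZMod p) (t : ZMod p) : ℤ) : ℂ))^2 = 1 := by
            have := quadraticChar_sq_one (a := (t : ZMod p)) t.ne_zero
            exact_mod_cast congrArg (fun z : ℤ => (z : ℂ)) this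
          rw [Units.val_mul]
          have hmul : ((quadraticChar (ZMod p) ((t : ZMod p) * (u : ZMod p)) : ℤ) : ℂ)
              = ((quadraticChar (ZMod p) (t : ZMod p) : ℤ) : ℂ) *
                ((quadraticChar (ZMod p) (u : ZMod p) : ℤ) : ℂ) := by
            rw [show (quadraticChar (ZMod p)) ((t : ZMod p) * (u : ZMod p))
              = (quadraticChar (ZMod p)) (t : ZMod p) * (quadraticChar (ZMod p)) (u : ZMod p)
              from map_mul _ _ _]
            push_cast
            rfl
          have hpsi2 : ZMod.stdAddChar (-((t : ZMod p) * (u : ZMod p) * j)) *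
              ZMod.stdAddChar ((t : ZMod p) * j)
              = ZMod.stdAddChar ((t : ZMod p) * ((1 - (u : ZMod p)) * j)) := by
            rw [← AddChar.map_add_eq_mul]
            congr 1
            ring
          linear_combination (-(((quadraticChar (ZMod p) (u : ZMod p) : ℤ) : ℂ) *
              ZMod.stdAddChar (-((t : ZMod p) * (u : ZMod p) * j)) *
              ZMod.stdAddChar ((t : ZMod p) * j))) * hsq
            - ((quadraticChar (ZMod p) (u : ZMod p) : ℤ) : ℂ) * hpsi2
            - (ZMod.stdAddChar (-((t : ZMod p) * (u : ZMod p) * j)) *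
              ((quadraticChar (ZMod p) (t : ZMod p) : ℤ) : ℂ) *
              ZMod.stdAddChar ((t : ZMod p) * j)) * hmul
      _ = ∑ u : (ZMod p)ˣ, ((quadraticChar (ZMod p) (u : ZMod p) : ℤ) : ℂ) *
            ∑ t : (ZMod p)ˣ, ZMod.stdAddChar ((t : ZMod p) * ((1 - (u : ZMod p)) * j)) := by
          rw [Finset.sum_comm]
          exact Finset.sum_congr rfl fun u _ => by rw [Finset.mul_sum]
      _ = ∑ u : (ZMod p)ˣ, ((quadraticChar (ZMod p) (u : ZMod p) : ℤ) : ℂ) *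
            (if u = 1 then (p : ℂ) - 1 else -1) := by
          refine Finset.sum_congr rfl fun u _ => ?_
          rw [unit_char_sum ((1 - (u : ZMod p)) * j)]
          congr 1
          have : (1 - (u : ZMod p)) * j = 0 ↔ u = 1 := by
            rw [mul_eq_zero, or_iff_left hj0, sub_eq_zero, eq_comm, Units.val_eq_one]
          simp only [this]
      _ = ∑ u : (ZMod p)ˣ, (((quadraticChar (ZMod p) (u : ZMod p) : ℤ) : ℂ) * (-1)
            + if u = 1 then (p : ℂ) else 0) := by
          refine Finset.sum_congr rfl fun u _ => ?_
          by_cases hu : u = 1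
          · subst hu
            simp only [if_pos, Units.val_one, map_one]
            push_cast
            ring
          · simp [hu]
      _ = (p : ℂ) := by
          rw [Finset.sum_add_distrib, ← Finset.sum_mul, hχunits, zero_mul, zero_add,
            Finset.sum_ite_eq' Finset.univ (1 : (ZMod p)ˣ) (fun _ => (p : ℂ))]
          simp
  have hTabs : ‖T‖ = Real.sqrt p := by
    have h1 : ((Complex.normSq T : ℝ) : ℂ) = (p : ℂ) := by rw [← Complex.mul_conj, hTT]
    have h2 : Complex.normSq T = (p : ℝ) := by exact_mod_cast h1
    rw [Complex.norm_def, h2]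
  -- a fixed nonsquare
  obtain ⟨n, hn⟩ := FiniteField.exists_nonsquare (F := ZMod p) hchar2
  have hn0 : n ≠ 0 := fun h0 => hn ⟨0, by rw [h0]; ring⟩
  have h2unit : IsUnit (2 : ZMod p) := by
    rw [isUnit_iff_ne_zero]
    intro h0
    rw [show (2 : ZMod p) = ((2 : ℕ) : ZMod p) by norm_num,
      ZMod.natCast_eq_zero_iff] at h0
    have h1 := Nat.le_of_dvd (by norm_num) h0
    have h2 := hp.two_le
    omega
  have absG : ∀ a : ZMod p, a ≠ 0 →
      ‖(∑ x : ZMod p, ZMod.stdAddChar (a * x ^ 2))‖ = Real.sqrt p := by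
    intro a ha
    have h1 := mul_conj_G (isUnit_iff_ne_zero.mpr ha) h2unit
    rw [Complex.mul_conj] at h1
    have h2 : Complex.normSq (∑ x : ZMod p, ZMod.stdAddChar (a * x ^ 2)) = (p : ℝ) := by
      exact_mod_cast h1
    rw [Complex.norm_def, h2]
  -- the Gauss sum only depends on the square class
  have key : ∀ s : (ZMod p)ˣ,
      (∑ x : ZMod p, ZMod.stdAddChar ((s : ZMod p) * x ^ 2)) ^ d
        = ((1 + ((quadraticChar (ZMod p) (s : ZMod p) : ℤ) : ℂ)) / 2) *
            (∑ x : ZMod p, ZMod.stdAddChar ((1 : ZMod p) * x ^ 2)) ^ d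
          + ((1 - ((quadraticChar (ZMod p) (s : ZMod p) : ℤ) : ℂ)) / 2) *
            (∑ x : ZMod p, ZMod.stdAddChar (n * x ^ 2)) ^ d := by
    intro s
    rcases quadraticChar_dichotomy (a := (s : ZMod p)) (Units.ne_zero s) with h | h
    · obtain ⟨t, ht⟩ := (quadraticChar_one_iff_isSquare (Units.ne_zero s)).mp h
      have ht0 : t ≠ 0 := fun h0 => Units.ne_zero s (by rw [ht, h0, mul_zero])
      have htu : IsUnit t := isUnit_iff_ne_zero.mpr ht0
      have hGs : (∑ x : ZMod p, ZMod.stdAddChar ((s : ZMod p) * x ^ 2))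
          = ∑ x : ZMod p, ZMod.stdAddChar ((1 : ZMod p) * x ^ 2) := by
        have hG2 := G_mul_sq (1 : ZMod p) htu.unit
        rw [htu.unit_spec] at hG2
        rw [← hG2]
        refine Finset.sum_congr rfl fun x _ => ?_
        congr 1
        rw [ht]
        ring
      rw [hGs, h]
      simp only [Int.cast_one]
      ring
    · have hχn : quadraticChar (ZMod p) n = -1 :=
        quadraticChar_neg_one_iff_not_isSquare.mpr hn
      have hsq : IsSquare ((s : ZMod p) * n⁻¹) := by
        have hne : (s : ZMod p) * n⁻¹ ≠ 0 :=
          mul_ne_zero (Units.ne_zero s) (inv_ne_zero hn0)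
        refine (quadraticChar_one_iff_isSquare hne).mp ?_
        rw [map_mul, h]
        have hinv : quadraticChar (ZMod p) n⁻¹ * quadraticChar (ZMod p) n = 1 := by
          rw [← map_mul, inv_mul_cancel₀ hn0, map_one]
        rw [hχn] at hinv
        have : quadraticChar (ZMod p) n⁻¹ = -1 := by linarith
        rw [this]
        ring
      obtain ⟨t, ht⟩ := hsq
      have hs_eq : (s : ZMod p) = n * (t * t) := by
        have h1 : n * ((s : ZMod p) * n⁻¹) = (s : ZMod p) := by
          field_simp
        rw [ht] at h1
        exact h1.symm
      have ht0 : t ≠ 0 := by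
        intro h0
        apply Units.ne_zero s
        rw [hs_eq, h0, mul_zero, mul_zero]
      have htu : IsUnit t := isUnit_iff_ne_zero.mpr ht0
      have hGs : (∑ x : ZMod p, ZMod.stdAddChar ((s : ZMod p) * x ^ 2))
          = ∑ x : ZMod p, ZMod.stdAddChar (n * x ^ 2) := by
        have hG2 := G_mul_sq n htu.unit
        rw [htu.unit_spec] at hG2
        rw [← hG2]
        refine Finset.sum_congr rfl fun x _ => ?_
        congr 1
        rw [hs_eq]
        ring
      rw [hGs, h]
      simp only [Int.cast_neg, Int.cast_one]
      ring
  -- decompose the full sum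
  have hSdecomp : (∑ s : (ZMod p)ˣ,
        (∑ x : ZMod p, ZMod.stdAddChar ((s : ZMod p) * x ^ 2)) ^ d *
          ZMod.stdAddChar (-((s : ZMod p) * j)))
      = (∑ x : ZMod p, ZMod.stdAddChar ((1 : ZMod p) * x ^ 2)) ^ d * ((C + T) / 2)
        + (∑ x : ZMod p, ZMod.stdAddChar (n * x ^ 2)) ^ d * ((C - T) / 2) := by
    have e0 : ∀ s : (ZMod p)ˣ,
        (∑ x : ZMod p, ZMod.stdAddChar ((s : ZMod p) * x ^ 2)) ^ d *
          ZMod.stdAddChar (-((s : ZMod p) * j))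
        = (∑ x : ZMod p, ZMod.stdAddChar ((1 : ZMod p) * x ^ 2)) ^ d *
            ((ZMod.stdAddChar (-((s : ZMod p) * j)) +
              ((quadraticChar (ZMod p) (s : ZMod p) : ℤ) : ℂ) *
                ZMod.stdAddChar (-((s : ZMod p) * j))) / 2)
          + (∑ x : ZMod p, ZMod.stdAddChar (n * x ^ 2)) ^ d *
            ((ZMod.stdAddChar (-((s : ZMod p) * j)) -
              ((quadraticChar (ZMod p) (s : ZMod p) : ℤ) : ℂ) *
                ZMod.stdAddChar (-((s : ZMod p) * j))) / 2) := fun s => by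
      rw [key s]
      ring
    rw [Finset.sum_congr rfl fun s _ => e0 s, Finset.sum_add_distrib,
      ← Finset.mul_sum, ← Finset.mul_sum]
    congr 1
    · congr 1
      rw [← Finset.sum_div, Finset.sum_add_distrib, hCdef, hTdef]
    · congr 1
      rw [← Finset.sum_div, Finset.sum_sub_distrib, hCdef, hTdef]
  rw [hSdecomp]
  have habsC : ‖C‖ = 1 := by rw [hCval]; simp
  have hCT1 : ‖C + T‖ ≤ 1 + Real.sqrt p := by
    refine (norm_add_le _ _).trans ?_
    rw [habsC, hTabs]
  have hCT2 : ‖C - T‖ ≤ 1 + Real.sqrt p := by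
    rw [sub_eq_add_neg]
    refine (norm_add_le _ _).trans ?_
    rw [habsC, norm_neg, hTabs]
  have hsqrtpos : (0 : ℝ) ≤ Real.sqrt p := Real.sqrt_nonneg _
  refine le_trans (norm_add_le _ _) ?_
  have b1 : ‖(∑ x : ZMod p, ZMod.stdAddChar ((1 : ZMod p) * x ^ 2)) ^ d * ((C + T) / 2)‖
      ≤ Real.sqrt p ^ d * ((1 + Real.sqrt p) / 2) := by
    rw [norm_mul, norm_pow, absG 1 one_ne_zero, norm_div, Complex.norm_two]
    gcongr
  have b2 : ‖(∑ x : ZMod p, ZMod.stdAddChar (n * x ^ 2)) ^ d * ((C - T) / 2)‖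
      ≤ Real.sqrt p ^ d * ((1 + Real.sqrt p) / 2) := by
    rw [norm_mul, norm_pow, absG n hn0, norm_div, Complex.norm_two]
    gcongr
  exact le_trans (add_le_add b1 b2) (le_of_eq (by ring))

end aux

/-- **Gauss sum power estimate.** Let `p` be an odd prime, `m ≥ 1`, `q = p^m`, `d ≥ 2`,
and `j` a unit of `ℤ/qℤ`. With `G(s,q) = Σ_{x ∈ ℤ/qℤ} exp(2πi·sx²/q)`, one has
`|Σ_{s ∈ (ℤ/qℤ)ˣ} G(s,q)^d·exp(−2πi·sj/q)| ≤ p^{md/2}·(p^{m/2} + p^{m−1})`. -/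
theorem gauss_sum_power_estimate (p m d : ℕ) [Fact p.Prime] (hodd : Odd p)
    (hm : 1 ≤ m) (hd : 2 ≤ d) (j : ZMod (p ^ m)) (hj : IsUnit j) :
    ‖(∑ s : (ZMod (p ^ m))ˣ,
        (∑ x : ZMod (p ^ m), eZMod (p ^ m) ((s : ZMod (p ^ m)) * x ^ 2)) ^ d *
          eZMod (p ^ m) (-((s : ZMod (p ^ m)) * j)))‖ ≤
      (p : ℝ) ^ ((m : ℝ) * d / 2) * ((p : ℝ) ^ ((m : ℝ) / 2) + (p : ℝ) ^ ((m : ℝ) - 1)) := by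
  have hp : p.Prime := Fact.out
  haveI : NeZero (p ^ m) := ⟨pow_ne_zero _ hp.ne_zero⟩
  simp only [eZMod_eq_stdAddChar]
  rcases Nat.lt_or_ge m 2 with hm2 | hm2
  · -- the case `m = 1`
    have hm1 : m = 1 := by omega
    subst hm1
    have hq1 : (p ^ 1).Prime := by rwa [pow_one]
    have hodd1 : Odd (p ^ 1) := by rwa [pow_one]
    refine (m_one_bound (p ^ 1) d hq1 hodd1 hd j hj).trans (le_of_eq ?_)
    rw [show ((p ^ 1 : ℕ) : ℝ) = (p : ℝ) by push_cast; ring]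
    rw [Real.sqrt_eq_rpow, ← Real.rpow_natCast ((p : ℝ) ^ ((1 : ℝ)/2)) d,
      ← Real.rpow_mul (Nat.cast_nonneg p)]
    norm_num
    left
    congr 1
    ring
  · -- the case `m ≥ 2`: the sum vanishes
    rw [sum_eq_zero_of_two_le p m d hodd hm2 j hj, norm_zero]
    positivity
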